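/- Let f be an isometric embedding of the 1-Wasserstein space over a countable discrete metric space X. For probability measures μ, ν and any x ∈ S_μ ∩ S_ν, the pointwise minimum of the restrictions of f(μ) and f(ν) to S_{f(δ_x)} has total mass min(μ({x}), ν({x})), i.e., (f(μ)|_{S_{f(δ_x)}} ∧ f(ν)|_{S_{f(δ_x)}})(X) = min(f(μ)|_{S_{f(δ_x)}}(X), f(ν)|_{S_{f(δ_x)}}(X)). -/

import Mathlib

open scoped ENNReal
set_option maxHeartbeats 1000000

namespace W19

variable {X : Type*} [Countable X] [DecidableEq X]

noncomputable def dirac (x : X) : X → ℝ≥0∞ := fun w => if w = x then 1 else 0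

lemma dirac_sum (x : X) : ∑' w, dirac x w = 1 := tsum_ite_eq x 1

omit [Countable X] in
lemma ind_mono (s : Set X) (a b : X → ℝ≥0∞) (h : ∀ w, a w ≤ b w) (y : X) :
    s.indicator a y ≤ s.indicator b y := by
  by_cases hy : y ∈ s
  · simpa [Set.indicator_of_mem hy] using h y
  · simp [Set.indicator_of_notMem hy]

omit [Countable X] in
lemma tsum_ite_split (μ : X → ℝ≥0∞) (x : X) :
    ∑' y, μ y = μ x + ∑' y, if y = x then 0 else μ y := by
  convert ENNReal.tsum_eq_add_tsum_ite x using 3 with y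
  funext y
  congr

section
variable (f : (X → ℝ≥0∞) → (X → ℝ≥0∞))
    (hmap : ∀ μ : X → ℝ≥0∞, (∑' x, μ x = 1) → ∑' x, f μ x = 1)
    (hiso : ∀ μ ν : X → ℝ≥0∞, (∑' x, μ x = 1) → (∑' x, ν x = 1) →
      1 - ∑' x, min (f μ x) (f ν x) = 1 - ∑' x, min (μ x) (ν x))

/-- support of f (dirac x) -/
def S (x : X) : Set X := {z | 0 < f (dirac x) z}

lemma tsum_min_le (a b : X → ℝ≥0∞) : ∑' y, min (a y) (b y) ≤ ∑' y, a y :=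
  ENNReal.tsum_le_tsum (fun y => min_le_left _ _)

include hmap hiso in
lemma iso_eq (μ ν : X → ℝ≥0∞) (hμ : ∑' x, μ x = 1) (hν : ∑' x, ν x = 1) :
    ∑' y, min (f μ y) (f ν y) = ∑' y, min (μ y) (ν y) := by
  have h1 : ∑' y, min (f μ y) (f ν y) ≤ 1 := (tsum_min_le _ _).trans_eq (hmap μ hμ)
  have h2 : ∑' y, min (μ y) (ν y) ≤ 1 := (tsum_min_le _ _).trans_eq hμ
  have h := hiso μ ν hμ hν
  have := congrArg (fun t => (1:ℝ≥0∞) - t) h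
  simpa [ENNReal.sub_sub_cancel ENNReal.one_ne_top h1,
    ENNReal.sub_sub_cancel ENNReal.one_ne_top h2] using this

include hmap hiso in
lemma min_dirac_sum (μ : X → ℝ≥0∞) (hμ : ∑' x, μ x = 1) (x : X) :
    ∑' y, min (f μ y) (f (dirac x) y) = μ x := by
  have hle : μ x ≤ 1 := hμ ▸ ENNReal.le_tsum x
  rw [iso_eq f hmap hiso μ (dirac x) hμ (dirac_sum x)]
  have : ∀ y, min (μ y) (dirac x y) = if y = x then μ x else 0 := by
    intro y; by_cases h : y = x <;> simp [dirac, h, min_eq_left hle]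
  rw [tsum_congr this, tsum_ite_eq]

include hmap hiso in
/-- Key structural lemma: mass of f μ on the support of f (dirac x) equals μ x. -/
lemma mass_on_support (μ : X → ℝ≥0∞) (hμ : ∑' x, μ x = 1) (x : X) :
    ∑' w, (S f x).indicator (f μ) w = μ x := by
  have hle : μ x ≤ 1 := hμ ▸ ENNReal.le_tsum x
  rcases eq_or_lt_of_le hle with heq | hlt
  · -- μ x = 1, so μ = dirac x
    have hsplit : ∑' y, μ y = μ x + ∑' y, if y = x then 0 else μ y :=
      tsum_ite_split μ x
    rw [hμ, ← heq] at hsplit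
    have hrest : ∑' y, (if y = x then 0 else μ y) = 0 := by
      have hne : μ x ≠ ⊤ := by rw [heq]; exact ENNReal.one_ne_top
      have h2 := hsplit
      nth_rewrite 1 [← add_zero (μ x)] at h2
      exact (WithTop.add_left_cancel hne h2).symm
    have hzero : ∀ y, y ≠ x → μ y = 0 := by
      intro y hy
      have h1 := ENNReal.le_tsum (f := fun y => if y = x then 0 else μ y) y
      rw [hrest] at h1
      simpa [hy] using nonpos_iff_eq_zero.mp h1
    have hμd : μ = dirac x := by
      funext y; by_cases h : y = x
      · simp [dirac, h, ← heq]
      · simp [dirac, h, hzero y h]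
    have hout : ∀ w, w ∉ S f x → f μ w = 0 := by
      intro w hw
      rw [hμd]
      exact nonpos_iff_eq_zero.mp (not_lt.mp hw)
    have : ∀ w, (S f x).indicator (f μ) w = f μ w := by
      intro w
      by_cases h : w ∈ S f x
      · simp [Set.indicator_of_mem h]
      · simp [Set.indicator_of_notMem h, hout w h]
    rw [tsum_congr this, hmap μ hμ, heq]
  · -- μ x < 1
    set c : ℝ≥0∞ := 1 - μ x with hc
    have hc0 : c ≠ 0 := by simpa [hc] using (tsub_pos_iff_lt.mpr hlt).ne'
    have hcle : c ≤ 1 := tsub_le_self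
    have hctop : c ≠ ⊤ := (hcle.trans_lt ENNReal.one_lt_top).ne
    set μ' : X → ℝ≥0∞ := fun y => if y = x then 0 else μ y * c⁻¹ with hμ'def
    have hsplit : (1:ℝ≥0∞) = μ x + ∑' y, if y = x then 0 else μ y := by
      rw [← hμ]; exact tsum_ite_split μ x
    have hrest : ∑' y, (if y = x then 0 else μ y) = c := by
      rw [hc]
      refine (ENNReal.eq_sub_of_add_eq (hle.trans_lt ENNReal.one_lt_top).ne ?_)
      rw [add_comm]; exact hsplit.symm
    have hμ'sum : ∑' y, μ' y = 1 := by
      have : ∀ y, μ' y = (if y = x then 0 else μ y) * c⁻¹ := by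
        intro y; by_cases h : y = x <;> simp [hμ'def, h]
      rw [tsum_congr this, ENNReal.tsum_mul_right, hrest, ENNReal.mul_inv_cancel hc0 hctop]
    have hminμμ' : ∑' y, min (μ y) (μ' y) = c := by
      have : ∀ y, min (μ y) (μ' y) = (if y = x then 0 else μ y) := by
        intro y; by_cases h : y = x
        · simp [hμ'def, h]
        · have h1 : μ y ≤ μ y * c⁻¹ :=
            le_mul_of_one_le_right' (ENNReal.one_le_inv.mpr hcle)
          simp [hμ'def, h, min_eq_left h1]
      rw [tsum_congr this, hrest]
    have hμ'zeroS : ∀ w, w ∈ S f x → f μ' w = 0 := by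
      have h0 : ∑' y, min (f μ' y) (f (dirac x) y) = 0 := by
        rw [iso_eq f hmap hiso μ' (dirac x) hμ'sum (dirac_sum x)]
        rw [ENNReal.tsum_eq_zero]
        intro y; by_cases h : y = x <;> simp [hμ'def, dirac, h]
      intro w hw
      have hm := ENNReal.tsum_eq_zero.mp h0 w
      by_contra hne
      exact (lt_min (pos_iff_ne_zero.mpr hne) hw).ne' hm
    -- lower bounds
    have hA : μ x ≤ ∑' w, (S f x).indicator (f μ) w := by
      rw [← min_dirac_sum f hmap hiso μ hμ x]
      refine ENNReal.tsum_le_tsum (fun w => ?_)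
      by_cases h : w ∈ S f x
      · simp [Set.indicator_of_mem h, min_le_left]
      · have : f (dirac x) w = 0 := nonpos_iff_eq_zero.mp (not_lt.mp h)
        simp [Set.indicator_of_notMem h, this]
    have hB : c ≤ ∑' w, (S f x)ᶜ.indicator (f μ) w := by
      have hg : ∑' y, min (f μ y) (f μ' y) = c := by
        rw [iso_eq f hmap hiso μ μ' hμ hμ'sum]; exact hminμμ'
      rw [← hg]
      refine ENNReal.tsum_le_tsum (fun w => ?_)
      by_cases h : w ∈ S f x
      · simp [Set.indicator_of_notMem (by simpa using h : w ∉ (S f x)ᶜ), hμ'zeroS w h]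
      · simp [Set.indicator_of_mem (by simpa using h : w ∈ (S f x)ᶜ), min_le_left]
    have hsum : (∑' w, (S f x).indicator (f μ) w) + ∑' w, (S f x)ᶜ.indicator (f μ) w = 1 := by
      rw [← ENNReal.tsum_add]
      rw [tsum_congr (fun w => Set.indicator_self_add_compl_apply (S f x) (f μ) w)]
      exact hmap μ hμ
    -- conclude
    have hbtop : (∑' w, (S f x)ᶜ.indicator (f μ) w) ≠ ⊤ := by
      intro h; rw [h] at hsum; simp at hsum
    have ha : ∑' w, (S f x).indicator (f μ) w = 1 - ∑' w, (S f x)ᶜ.indicator (f μ) w :=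
      ENNReal.eq_sub_of_add_eq hbtop hsum
    have : ∑' w, (S f x).indicator (f μ) w ≤ μ x := by
      rw [ha]
      calc 1 - ∑' w, (S f x)ᶜ.indicator (f μ) w ≤ 1 - c := tsub_le_tsub_left hB 1
      _ = μ x := by rw [hc, ENNReal.sub_sub_cancel ENNReal.one_ne_top hle]
    exact le_antisymm this hA

include hmap hiso in
lemma supports_disjoint {y z : X} (hyz : y ≠ z) (w : X) :
    min (f (dirac y) w) (f (dirac z) w) = 0 := by
  have h0 : ∑' w, min (f (dirac y) w) (f (dirac z) w) = 0 := by
    rw [iso_eq f hmap hiso (dirac y) (dirac z) (dirac_sum y) (dirac_sum z)]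
    rw [ENNReal.tsum_eq_zero]
    intro w; by_cases h1 : w = y <;> by_cases h2 : w = z <;>
      simp_all [dirac, hyz]
  exact ENNReal.tsum_eq_zero.mp h0 w

include hmap hiso in
lemma mem_S_unique {y z : X} (hyz : y ≠ z) {w : X} (hw : w ∈ S f y) : w ∉ S f z := by
  intro hz
  exact (lt_min hw hz).ne' (supports_disjoint f hmap hiso hyz w)

include hmap hiso in
/-- f μ vanishes outside the union of the supports -/
lemma vanish_outside (μ : X → ℝ≥0∞) (hμ : ∑' x, μ x = 1) (w : X)
    (hw : ∀ y, w ∉ S f y) : f μ w = 0 := by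
  have hple : ∀ v, (∑' y, (S f y).indicator (f μ) v) ≤ f μ v := by
    intro v
    by_cases hv : ∃ y, v ∈ S f y
    · obtain ⟨y0, hy0⟩ := hv
      have h1 : (∑' y, (S f y).indicator (f μ) v) = (S f y0).indicator (f μ) v :=
        tsum_eq_single y0 (fun y hy => Set.indicator_of_notMem (mem_S_unique f hmap hiso hy.symm hy0) _)
      rw [h1, Set.indicator_of_mem hy0]
    · push_neg at hv
      have h1 : (∑' y, (S f y).indicator (f μ) v) = 0 :=
        ENNReal.tsum_eq_zero.mpr (fun y => Set.indicator_of_notMem (hv y) _)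
      simp [h1]
  have hhsum : (∑' v, ∑' y, (S f y).indicator (f μ) v) = 1 := by
    rw [ENNReal.tsum_comm, tsum_congr (fun y => mass_on_support f hmap hiso μ hμ y)]
    exact hμ
  have heq : ∀ v, (∑' y, (S f y).indicator (f μ) v) = f μ v := by
    intro v
    by_contra hne
    have hlt : (∑' y, (S f y).indicator (f μ) v) < f μ v := (hple v).lt_of_ne hne
    have : (∑' v, ∑' y, (S f y).indicator (f μ) v) < ∑' v, f μ v :=
      ENNReal.tsum_lt_tsum (by rw [hhsum]; exact ENNReal.one_ne_top) hple hlt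
    rw [hhsum, hmap μ hμ] at this
    exact lt_irrefl _ this
  have h0 : (∑' y, (S f y).indicator (f μ) w) = 0 :=
    ENNReal.tsum_eq_zero.mpr (fun y => Set.indicator_of_notMem (hw y) _)
  rw [← heq w, h0]


include hmap hiso in
lemma main_lemma (μ ν : X → ℝ≥0∞) (hμ : ∑' x, μ x = 1) (hν : ∑' x, ν x = 1) (x : X) :
    ∑' y, (S f x).indicator (fun w => min (f μ w) (f ν w)) y = min (μ x) (ν x) := by
  -- upper bound
  have hub : ∑' y, (S f x).indicator (fun w => min (f μ w) (f ν w)) y ≤ min (μ x) (ν x) := by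
    refine le_min ?_ ?_
    · rw [← mass_on_support f hmap hiso μ hμ x]
      exact ENNReal.tsum_le_tsum fun y =>
        ind_mono _ _ _ (fun w => min_le_left _ _) y
    · rw [← mass_on_support f hmap hiso ν hν x]
      exact ENNReal.tsum_le_tsum fun y =>
        ind_mono _ _ _ (fun w => min_le_right _ _) y
  -- lower bound
  have hglobal : ∑' y, min (f μ y) (f ν y) = ∑' y, min (μ y) (ν y) :=
    iso_eq f hmap hiso μ ν hμ hν
  have hsplitg : ∑' y, min (f μ y) (f ν y)
      = (∑' y, (S f x).indicator (fun w => min (f μ w) (f ν w)) y)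
        + ∑' y, (S f x)ᶜ.indicator (fun w => min (f μ w) (f ν w)) y := by
    rw [← ENNReal.tsum_add]
    exact tsum_congr fun y =>
      (Set.indicator_self_add_compl_apply (S f x) (fun w => min (f μ w) (f ν w)) y).symm
  have hR : ∑' y, min (μ y) (ν y)
      = min (μ x) (ν x) + ∑' y, (if y = x then 0 else min (μ y) (ν y)) :=
    tsum_ite_split (fun y => min (μ y) (ν y)) x
  have hRtop : (∑' y, (if y = x then 0 else min (μ y) (ν y))) ≠ ⊤ := by
    have h1 : (∑' y, (if y = x then 0 else min (μ y) (ν y))) ≤ ∑' y, μ y := by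
      refine ENNReal.tsum_le_tsum fun y => ?_
      split_ifs
      · exact zero_le
      · exact min_le_left _ _
    rw [hμ] at h1
    exact (h1.trans_lt ENNReal.one_lt_top).ne
  have hSc : (∑' w, (S f x)ᶜ.indicator (fun w => min (f μ w) (f ν w)) w)
      ≤ ∑' y, (if y = x then 0 else min (μ y) (ν y)) := by
    have hpt : ∀ w, (S f x)ᶜ.indicator (fun w => min (f μ w) (f ν w)) w
        ≤ ∑' y, (if y = x then 0
            else (S f y).indicator (fun w => min (f μ w) (f ν w)) w) := by
      intro w
      by_cases hwS : w ∈ S f x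
      · rw [Set.indicator_of_notMem (by simpa using hwS)]
        exact zero_le
      · rw [Set.indicator_of_mem (by simpa using hwS)]
        by_cases hv : ∃ y, w ∈ S f y
        · obtain ⟨y0, hy0⟩ := hv
          have hy0x : y0 ≠ x := fun h => hwS (h ▸ hy0)
          have h1 := ENNReal.le_tsum
            (f := fun y => if y = x then 0
              else (S f y).indicator (fun w => min (f μ w) (f ν w)) w) y0
          simpa [hy0x, Set.indicator_of_mem hy0] using h1
        · push_neg at hv
          have : f μ w = 0 := vanish_outside f hmap hiso μ hμ w hv
          simp [this]
    calc (∑' w, (S f x)ᶜ.indicator (fun w => min (f μ w) (f ν w)) w)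
        ≤ ∑' w, ∑' y, (if y = x then 0
            else (S f y).indicator (fun w => min (f μ w) (f ν w)) w) :=
          ENNReal.tsum_le_tsum hpt
      _ = ∑' y, ∑' w, (if y = x then 0
            else (S f y).indicator (fun w => min (f μ w) (f ν w)) w) :=
          ENNReal.tsum_comm
      _ ≤ ∑' y, (if y = x then 0 else min (μ y) (ν y)) := by
          refine ENNReal.tsum_le_tsum fun y => ?_
          by_cases h : y = x
          · simp [h]
          · simp only [h, if_false]
            refine le_min ?_ ?_
            · rw [← mass_on_support f hmap hiso μ hμ y]
              exact ENNReal.tsum_le_tsum fun w =>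
                ind_mono _ _ _ (fun w => min_le_left _ _) w
            · rw [← mass_on_support f hmap hiso ν hν y]
              exact ENNReal.tsum_le_tsum fun w =>
                ind_mono _ _ _ (fun w => min_le_right _ _) w
  have hlb : min (μ x) (ν x) ≤ ∑' y, (S f x).indicator (fun w => min (f μ w) (f ν w)) y := by
    have hchain : min (μ x) (ν x) + ∑' y, (if y = x then 0 else min (μ y) (ν y))
        ≤ (∑' y, (S f x).indicator (fun w => min (f μ w) (f ν w)) y)
          + ∑' y, (if y = x then 0 else min (μ y) (ν y)) := by
      calc min (μ x) (ν x) + ∑' y, (if y = x then 0 else min (μ y) (ν y))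
          = ∑' y, min (μ y) (ν y) := hR.symm
        _ = ∑' y, min (f μ y) (f ν y) := hglobal.symm
        _ = (∑' y, (S f x).indicator (fun w => min (f μ w) (f ν w)) y)
            + ∑' y, (S f x)ᶜ.indicator (fun w => min (f μ w) (f ν w)) y := hsplitg
        _ ≤ _ := add_le_add_right hSc _
    exact (ENNReal.add_le_add_iff_right hRtop).mp hchain
  exact le_antisymm hub hlb

end
end W19


open scoped ENNReal

/-- For an isometric embedding f of the 1-Wasserstein space over a countable
discrete metric space X, for probability measures μ, ν and x ∈ S_μ ∩ S_ν, the pointwise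
minimum of the restrictions of f(μ) and f(ν) to S_{f(δ_x)} has total mass
min(μ({x}), ν({x})) = min(f(μ)|_{S_{f(δ_x)}}(X), f(ν)|_{S_{f(δ_x)}}(X)). -/
theorem min_of_restrictions_mass {X : Type*} [Countable X] [DecidableEq X]
    (f : (X → ℝ≥0∞) → (X → ℝ≥0∞))
    (hmap : ∀ μ : X → ℝ≥0∞, (∑' x, μ x = 1) → ∑' x, f μ x = 1)
    (hiso : ∀ μ ν : X → ℝ≥0∞, (∑' x, μ x = 1) → (∑' x, ν x = 1) →
      1 - ∑' x, min (f μ x) (f ν x) = 1 - ∑' x, min (μ x) (ν x))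
    (μ ν : X → ℝ≥0∞) (hμ : ∑' x, μ x = 1) (hν : ∑' x, ν x = 1)
    (x : X) (hxμ : 0 < μ x) (hxν : 0 < ν x) :
    (∑' y : X, min
        (Set.indicator {z | 0 < f (fun w => if w = x then 1 else 0) z} (f μ) y)
        (Set.indicator {z | 0 < f (fun w => if w = x then 1 else 0) z} (f ν) y)
      = min (μ x) (ν x)) ∧
    (∑' y : X, min
        (Set.indicator {z | 0 < f (fun w => if w = x then 1 else 0) z} (f μ) y)
        (Set.indicator {z | 0 < f (fun w => if w = x then 1 else 0) z} (f ν) y)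
      = min
        (∑' y : X, Set.indicator {z | 0 < f (fun w => if w = x then 1 else 0) z} (f μ) y)
        (∑' y : X, Set.indicator {z | 0 < f (fun w => if w = x then 1 else 0) z} (f ν) y)) := by
  have hS : {z | 0 < f (fun w => if w = x then 1 else 0) z} = W19.S f x := rfl
  have hmin : ∀ y, min ((W19.S f x).indicator (f μ) y) ((W19.S f x).indicator (f ν) y)
      = (W19.S f x).indicator (fun w => min (f μ w) (f ν w)) y := by
    intro y
    by_cases h : y ∈ W19.S f x
    · simp [Set.indicator_of_mem h]
    · simp [Set.indicator_of_notMem h]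
  rw [hS]
  constructor
  · rw [tsum_congr hmin]
    exact W19.main_lemma f hmap hiso μ ν hμ hν x
  · rw [tsum_congr hmin, W19.main_lemma f hmap hiso μ ν hμ hν x,
      W19.mass_on_support f hmap hiso μ hμ x, W19.mass_on_support f hmap hiso ν hν x]
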